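/- Fix an integer g ≥ 1, let C_{−1} be a real number, and let λ_1 < λ_2 < ⋯ < λ_g be real numbers with 0 < λ_1 and 2·(λ_1 + ⋯ + λ_g) < C_{−1}. Define p_i = C_{−1} − 2·Σ_{j=1}^{g} min(λ_i, λ_j) for i = 1,…,g, and define the g×g real matrices Λ and A by Λ_{ij} = C_{−1} + p_i·δ_{ij} + 2·min(λ_i, λ_j) and A_{ij} = Λ_{ij} − C_{−1} = p_i·δ_{ij} + 2·min(λ_i, λ_j). Then det Λ = (g+1)·det A = (g+1)·p_1·p_2·⋯·p_{g−1}·C_{−1} (the product p_1⋯p_{g−1} being empty, equal to 1, when g = 1). -/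

import Mathlib

open Matrix Finset in
private lemma key_det {n : ℕ} (M : Matrix (Fin (n+1)) (Fin (n+1)) ℝ) (d : ℝ) (hd : d ≠ 0)
    (hrow : ∀ i, ∑ j, M i j = d)
    (htri : ∀ i j : Fin (n+1), i ≠ Fin.last n → j < i → M i j = M (Fin.last n) j) :
    M.det = d * ∏ i : Fin n,
      (M i.castSucc i.castSucc - M (Fin.last n) i.castSucc) := by
  set L : Fin (n+1) := Fin.last n with hL
  -- Step 1: subtract last row from all other rows
  set N : Matrix (Fin (n+1)) (Fin (n+1)) ℝ :=
    fun i j => if i = L then M i j else M i j - M L j with hN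
  have hMN : M.det = N.det := by
    apply det_eq_of_forall_row_eq_smul_add_const
      (fun i => if i = L then 0 else 1) L (by simp)
    intro i j
    by_cases h : i = L <;> simp [hN, h]
  -- Step 2: replace last column by sum of all columns
  set N' : Matrix (Fin (n+1)) (Fin (n+1)) ℝ :=
    N.updateCol L (fun i => if i = L then d else 0) with hN'
  have hNN' : N'.det = N.det := by
    have hc : (fun i => if i = L then d else 0) =
        fun k => ∑ i, (1:ℝ) • N k i := by
      funext k
      by_cases h : k = L
      · simp [hN, h, hrow]
      · simp only [hN, h, if_neg h, one_smul]
        rw [Finset.sum_sub_distrib, hrow, hrow, sub_self]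
        simp [h]
    rw [hN', hc, det_updateCol_sum N L (fun _ => (1:ℝ))]
    simp
  -- Step 3: clear the last row using the last column
  set T : Matrix (Fin (n+1)) (Fin (n+1)) ℝ :=
    fun i j => if j = L then (if i = L then d else 0)
      else if i = L then 0 else N i j with hT
  have hN'T : N'.det = T.det := by
    rw [← det_transpose N', ← det_transpose T]
    apply det_eq_of_forall_row_eq_smul_add_const
      (fun j => if j = L then 0 else M L j / d) L (by simp)
    intro i j
    show N' j i = T j i + _ * T j L
    by_cases hi : i = L
    · subst hi
      by_cases hj : j = L <;>
        simp [hN', hT, hj, Matrix.updateCol_apply]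
    · by_cases hj : j = L
      · subst hj
        rw [hN', Matrix.updateCol_ne hi]
        simp [hN', hT, hi, hN, Matrix.updateCol_apply,
          div_mul_cancel₀ _ hd]
      · simp [hN', hT, hi, hj, Matrix.updateCol_apply]
  -- Step 4: T is upper triangular
  have htriT : T.BlockTriangular id := by
    intro i j hij
    have hij' : j < i := hij
    have hjL : j ≠ L := ne_of_lt (lt_of_lt_of_le hij' (Fin.le_last i))
    by_cases hi : i = L
    · simp [hT, hjL, hi]
    · simp [hT, hjL, hi, hN, htri i j hi hij']
  have hdetT : T.det = ∏ i, T i i := det_of_upperTriangular htriT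
  rw [hMN, ← hNN', hN'T, hdetT, Fin.prod_univ_castSucc]
  have hTL : T L L = d := by simp [hT]
  have hTc : ∀ i : Fin n, T i.castSucc i.castSucc =
      M i.castSucc i.castSucc - M L i.castSucc := by
    intro i
    have h1 : (i.castSucc : Fin (n+1)) ≠ L := (Fin.castSucc_lt_last i).ne
    simp [hT, h1, hN]
  rw [Finset.prod_congr rfl (fun i _ => hTc i), hTL]
  ring

open Matrix Finset in
/-- Determinant identity for the period matrices of the tropical Jacobian:
with `Λ_{ij} = C_{−1} + p_i δ_{ij} + 2 min(λ_i,λ_j)` and `A = Λ − C_{−1}`,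
one has `det Λ = (g+1)·det A = (g+1)·p_1⋯p_{g−1}·C_{−1}`.
(Subscripts are 1-based: the matrix entry at `(i,j) : Fin g × Fin g` uses the
values `λ_{i+1}, λ_{j+1}, p_{i+1}`.) -/
theorem trop_jacobian_det (g : ℕ) (hg : 1 ≤ g) (Cm1 : ℝ) (lam p : ℕ → ℝ)
    (hpos : 0 < lam 1)
    (hmono : ∀ i : ℕ, 1 ≤ i → i < g → lam i < lam (i + 1))
    (hsum : 2 * (∑ i ∈ Finset.Icc 1 g, lam i) < Cm1)
    (hp : ∀ i : ℕ, 1 ≤ i → i ≤ g →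
      p i = Cm1 - 2 * ∑ j ∈ Finset.Icc 1 g, min (lam i) (lam j))
    (Lam A : Matrix (Fin g) (Fin g) ℝ)
    (hLam : ∀ i j : Fin g, Lam i j =
      Cm1 + (if i = j then p ((i : ℕ) + 1) else 0)
        + 2 * min (lam ((i : ℕ) + 1)) (lam ((j : ℕ) + 1)))
    (hA : ∀ i j : Fin g, A i j = Lam i j - Cm1) :
    Lam.det = (g + 1) * A.det ∧
    Lam.det = (g + 1) * (∏ i ∈ Finset.Icc 1 (g - 1), p i) * Cm1 := by
  obtain ⟨m, rfl⟩ : ∃ m, g = m + 1 := ⟨g - 1, (Nat.succ_pred_eq_of_pos hg).symm⟩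
  -- monotonicity of lam on [1, m+1]
  have hmono' : ∀ i j : ℕ, 1 ≤ i → i ≤ j → j ≤ m + 1 → lam i ≤ lam j := by
    intro i j h1 hij
    induction hij with
    | refl => intro _; exact le_rfl
    | @step k hk ih =>
      intro h2
      have hk1 : k < m + 1 := h2
      exact le_trans (ih (le_of_lt hk1)) (le_of_lt (hmono k (h1.trans hk) hk1))
  -- positivity
  have hlampos : ∀ i : ℕ, 1 ≤ i → i ≤ m + 1 → 0 < lam i :=
    fun i h1 h2 => lt_of_lt_of_le hpos (hmono' 1 i le_rfl h1 h2)
  have hCpos : 0 < Cm1 := by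
    have h1 : 0 < ∑ i ∈ Finset.Icc 1 (m+1), lam i := by
      apply Finset.sum_pos
      · intro i hi
        rw [Finset.mem_Icc] at hi
        exact hlampos i hi.1 hi.2
      · exact ⟨1, by simp⟩
    nlinarith
  -- reindexing sums over Fin (m+1) to Icc 1 (m+1)
  have hreindex : ∀ f : ℕ → ℝ,
      (∑ j : Fin (m+1), f ((j : ℕ) + 1)) = ∑ j ∈ Finset.Icc 1 (m+1), f j := by
    intro f
    rw [Fin.sum_univ_eq_sum_range (fun j => f (j + 1)) (m+1),
      ← Finset.Ico_add_one_right_eq_Icc, Finset.sum_Ico_eq_sum_range]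
    simp [add_comm]
  -- row sums of Lam
  have hrowLam : ∀ i : Fin (m+1), ∑ j, Lam i j = ((m:ℝ) + 2) * Cm1 := by
    intro i
    have hmin : (∑ j : Fin (m+1), min (lam ((i : ℕ) + 1)) (lam ((j : ℕ) + 1)))
        = ∑ j ∈ Finset.Icc 1 (m+1), min (lam ((i : ℕ) + 1)) (lam j) :=
      hreindex (fun j => min (lam ((i : ℕ) + 1)) (lam j))
    have hpi := hp ((i : ℕ) + 1) (Nat.le_add_left 1 i) (Nat.add_le_add_right (Nat.lt_succ_iff.mp i.isLt) 1)
    simp only [hLam]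
    rw [Finset.sum_add_distrib, Finset.sum_add_distrib, Finset.sum_const,
      Finset.sum_ite_eq, ← Finset.mul_sum, hmin]
    simp only [Finset.mem_univ, if_pos, Finset.card_univ, Fintype.card_fin,
      nsmul_eq_mul]
    rw [hpi]
    push_cast
    ring
  -- lower entries of Lam agree with the last row
  have htriLam : ∀ i j : Fin (m+1), i ≠ Fin.last m → j < i →
      Lam i j = Lam (Fin.last m) j := by
    intro i j hi hj
    have hij : (j : ℕ) < (i : ℕ) := hj
    have hne : i ≠ j := fun h => absurd h.symm (ne_of_lt hj)
    have hne' : (Fin.last m) ≠ j := fun h => absurd h.symm (ne_of_lt (lt_of_lt_of_le hj (Fin.le_last i)))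
    rw [hLam, hLam, if_neg hne, if_neg hne']
    have h1 : min (lam ((i : ℕ) + 1)) (lam ((j : ℕ) + 1)) = lam ((j : ℕ) + 1) :=
      min_eq_right (hmono' _ _ (Nat.le_add_left 1 j) (by omega)
        (Nat.add_le_add_right (Nat.lt_succ_iff.mp i.isLt) 1))
    have h2 : min (lam (((Fin.last m : Fin (m+1)) : ℕ) + 1)) (lam ((j : ℕ) + 1))
        = lam ((j : ℕ) + 1) := by
      apply min_eq_right
      have hj1 : (j : ℕ) + 1 ≤ ((Fin.last m : Fin (m+1)) : ℕ) + 1 := by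
        simp only [Fin.val_last]; omega
      exact hmono' _ _ (Nat.le_add_left 1 j) hj1 (by simp only [Fin.val_last]; exact le_rfl)
    rw [h1, h2]
  -- diagonal differences
  have hdiag : ∀ i : Fin m,
      Lam i.castSucc i.castSucc - Lam (Fin.last m) i.castSucc = p ((i : ℕ) + 1) := by
    intro i
    have hne : (Fin.last m) ≠ i.castSucc := (Fin.castSucc_lt_last i).ne'
    rw [hLam, hLam, if_pos rfl, if_neg hne]
    have h1 : min (lam ((i.castSucc : ℕ) + 1)) (lam ((i.castSucc : ℕ) + 1))
        = lam ((i.castSucc : ℕ) + 1) := min_self _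
    have h2 : min (lam (((Fin.last m : Fin (m+1)) : ℕ) + 1)) (lam ((i.castSucc : ℕ) + 1))
        = lam ((i.castSucc : ℕ) + 1) := by
      apply min_eq_right
      have hi1 : ((i.castSucc : Fin (m+1)) : ℕ) + 1 ≤ ((Fin.last m : Fin (m+1)) : ℕ) + 1 := by
        simp only [Fin.val_last, Fin.coe_castSucc]; omega
      exact hmono' _ _ (Nat.le_add_left 1 _) hi1 (by simp only [Fin.val_last]; exact le_rfl)
    rw [h1, h2]
    simp only [Fin.coe_castSucc]
    ring
  -- apply key lemma to Lam
  have hdetLam : Lam.det = ((m:ℝ) + 2) * Cm1 * ∏ i : Fin m, p ((i : ℕ) + 1) := by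
    rw [key_det Lam (((m:ℝ) + 2) * Cm1)
      (mul_ne_zero (by positivity) hCpos.ne') hrowLam htriLam]
    congr 1
    exact Finset.prod_congr rfl (fun i _ => by
      have := hdiag i; simpa [Fin.castSucc] using this)
  -- A facts
  have hrowA : ∀ i : Fin (m+1), ∑ j, A i j = Cm1 := by
    intro i
    simp only [hA]
    rw [Finset.sum_sub_distrib, hrowLam, Finset.sum_const]
    simp
    ring
  have htriA : ∀ i j : Fin (m+1), i ≠ Fin.last m → j < i →
      A i j = A (Fin.last m) j := by
    intro i j hi hj
    rw [hA, hA, htriLam i j hi hj]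
  have hdetA : A.det = Cm1 * ∏ i : Fin m, p ((i : ℕ) + 1) := by
    rw [key_det A Cm1 hCpos.ne' hrowA htriA]
    congr 1
    refine Finset.prod_congr rfl (fun i _ => ?_)
    rw [hA, hA]
    have := hdiag i
    linarith
  -- product over Icc
  have hprod : (∏ i ∈ Finset.Icc 1 (m + 1 - 1), p i) = ∏ i : Fin m, p ((i : ℕ) + 1) := by
    rw [Nat.add_sub_cancel, Fin.prod_univ_eq_prod_range (fun i => p (i + 1)) m,
      ← Finset.Ico_add_one_right_eq_Icc, Finset.prod_Ico_eq_prod_range]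
    simp [add_comm]
  constructor
  · rw [hdetLam, hdetA]
    push_cast
    ring
  · rw [hdetLam, hprod]
    push_cast
    ring
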